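/- In the setting of the previous lemma, if additionally M is a finitely generated right R-module and σ(M) = M, then the map ψ : Hom_R(M,R)[z] → Hom_{R[z;σ]}(M[z], R[z;σ]), f z^k ↦ [m z^i ↦ σ^k(f(m)) z^{k+i}], is bijective. -/

import Mathlib

/-!
STATEMENT 9: In the setting of the previous lemma, if moreover `M` is a finitely generated
right `R`-module and `σ(M) = M`, then
`ψ : Hom_R(M,R)[z] → Hom_{R[z;σ]}(M[z], R[z;σ])`, `f z^k ↦ [m zⁱ ↦ σ^k(f(m)) z^{k+i}]`,
is bijective.

Encoding as in STATEMENT 8: `S[z;σ]` is a ring `T` with `ι : S → T`, `z : T`, the skew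
relation and unique coefficient representation `coeff`; elements of `Hom_R(M,R)[z]` are
finitely supported families `f : ℕ → S → S` of right `R`-linear `R`-valued maps on `M`;
`ψ(Σ_{k∈D} f_k z^k)` is the map `t ↦ Σ_{k ∈ D} Σ_i ι(σ^k(f_k(coeff t i))) z^{k+i}`.
Bijectivity is stated as: (injectivity) the kernel of the additive map `ψ` is trivial, and
(surjectivity) every right `R[z;σ]`-linear map `φ : M[z] → R[z;σ]` is of the form
`ψ(Σ f_k z^k)`.
-/

theorem stmt9 {S T : Type*} [Ring S] [Ring T] (R : Subring S) (σ : RingAut S)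
    (hσR : ∀ s : S, s ∈ R ↔ σ s ∈ R)
    (M : AddSubgroup S)
    (hMR : ∀ m ∈ M, ∀ r ∈ R, m * r ∈ M)
    -- `σ(M) = M`
    (hMσ : ∀ m : S, m ∈ M ↔ σ m ∈ M)
    -- `M` is a finitely generated right `R`-module
    (hfg : ∃ (n : ℕ) (b : Fin n → S), (∀ i, b i ∈ M) ∧
      ∀ m ∈ M, ∃ lam : Fin n → S, (∀ i, lam i ∈ R) ∧ m = ∑ i, b i * lam i)
    (ι : S →+* T) (z : T)
    (hcomm : ∀ s : S, z * ι s = ι (σ s) * z)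
    (coeff : T → (ℕ →₀ S))
    (hco1 : ∀ t : T, t = (coeff t).sum fun i s => ι s * z ^ i)
    (hco2 : ∀ c : ℕ →₀ S, coeff (c.sum fun i s => ι s * z ^ i) = c) :
    -- `ψ` is injective
    (∀ (D : Finset ℕ) (f : ℕ → S → S),
      (∀ k ∉ D, ∀ m ∈ M, f k m = 0) →
      (∀ k : ℕ, ∀ m ∈ M, ∀ m' ∈ M, f k (m + m') = f k m + f k m') →
      (∀ k : ℕ, ∀ m ∈ M, f k m ∈ R) →
      (∀ k : ℕ, ∀ m ∈ M, ∀ r ∈ R, f k (m * r) = f k m * r) →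
      (∀ t : T, (∀ i, coeff t i ∈ M) →
        (∑ k ∈ D, (coeff t).sum fun i m => ι ((σ ^ k) (f k m)) * z ^ (k + i)) = 0) →
      ∀ k : ℕ, ∀ m ∈ M, f k m = 0) ∧
    -- `ψ` is surjective
    (∀ φ : T → T,
      (∀ t t' : T, (∀ i, coeff t i ∈ M) → (∀ i, coeff t' i ∈ M) →
        φ (t + t') = φ t + φ t') →
      (∀ t : T, (∀ i, coeff t i ∈ M) → ∀ j : ℕ, coeff (φ t) j ∈ R) →
      (∀ t : T, (∀ i, coeff t i ∈ M) → ∀ a : T, (∀ i, coeff a i ∈ R) →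
        φ (t * a) = φ t * a) →
      ∃ (D : Finset ℕ) (f : ℕ → S → S),
        (∀ k ∉ D, ∀ m ∈ M, f k m = 0) ∧
        (∀ k : ℕ, ∀ m ∈ M, ∀ m' ∈ M, f k (m + m') = f k m + f k m') ∧
        (∀ k : ℕ, ∀ m ∈ M, f k m ∈ R) ∧
        (∀ k : ℕ, ∀ m ∈ M, ∀ r ∈ R, f k (m * r) = f k m * r) ∧
        (∀ t : T, (∀ i, coeff t i ∈ M) →
          φ t = ∑ k ∈ D, (coeff t).sum fun i m => ι ((σ ^ k) (f k m)) * z ^ (k + i))) := by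

  classical
  -- The "evaluation" map E : (ℕ →₀ S) →+ T, c ↦ Σ ι(c i) z^i
  have hEadd : ∀ c d : ℕ →₀ S, ((c + d).sum fun i s => ι s * z ^ i)
      = (c.sum fun i s => ι s * z ^ i) + (d.sum fun i s => ι s * z ^ i) := by
    intro c d
    exact Finsupp.sum_add_index (fun i _ => by simp) (fun i _ s s' => by rw [map_add, add_mul])
  set cE : (ℕ →₀ S) →+ T := AddMonoidHom.mk' (fun c => c.sum fun i s => ι s * z ^ i) hEadd
    with hcEdef
  have hcEapply : ∀ c : ℕ →₀ S, cE c = c.sum fun i s => ι s * z ^ i := fun c => rfl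
  have hco2' : ∀ c, coeff (cE c) = c := fun c => hco2 c
  have hco1' : ∀ t, t = cE (coeff t) := fun t => hco1 t
  have hEsingle : ∀ (i : ℕ) (s : S), cE (Finsupp.single i s) = ι s * z ^ i := by
    intro i s
    rw [hcEapply, Finsupp.sum_single_index (by simp)]
  have hcoeff_add : ∀ t t' : T, coeff (t + t') = coeff t + coeff t' := by
    intro t t'
    conv_lhs => rw [hco1' t, hco1' t', ← map_add]
    exact hco2' _
  have hcoeff0 : coeff 0 = 0 := by
    have h := hco2' 0
    rwa [map_zero] at h
  set cC : T →+ (ℕ →₀ S) := AddMonoidHom.mk' coeff hcoeff_add with hcCdef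
  have hz_pow : ∀ (j : ℕ) (s : S), z ^ j * ι s = ι ((σ ^ j) s) * z ^ j := by
    intro j
    induction j with
    | zero => intro s; rw [pow_zero, pow_zero, one_mul, mul_one]; rfl
    | succ nn ih =>
      intro s
      have h1 : (σ ^ (nn + 1)) s = (σ ^ nn) (σ s) := by rw [pow_succ]; rfl
      rw [pow_succ, mul_assoc, hcomm, ← mul_assoc, ih, mul_assoc, ← pow_succ, h1]
  have hcoeffiz : ∀ (i : ℕ) (m : S), coeff (ι m * z ^ i) = Finsupp.single i m := by
    intro i m
    rw [← hEsingle]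
    exact hco2' _
  have hcoeffi : ∀ m : S, coeff (ι m) = Finsupp.single 0 m := by
    intro m
    have h := hcoeffiz 0 m
    simpa using h
  have hcoeffz : ∀ i : ℕ, coeff (z ^ i) = Finsupp.single i 1 := by
    intro i
    have h := hcoeffiz i 1
    simpa using h
  have hmul_coeff : ∀ (t : T) (r : S) (k : ℕ),
      coeff (t * ι r) k = coeff t k * (σ ^ k) r := by
    intro t r k
    have h1 : t * ι r = cE ((coeff t).sum fun j s => Finsupp.single j (s * (σ ^ j) r)) := by
      rw [map_finsuppSum]
      conv_lhs => rw [hco1' t, hcEapply, Finsupp.sum_mul]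
      refine Finsupp.sum_congr fun j hj => ?_
      rw [hEsingle, map_mul, mul_assoc, mul_assoc, hz_pow]
    have h2 : coeff (t * ι r) = (coeff t).sum fun j s => Finsupp.single j (s * (σ ^ j) r) := by
      rw [h1]
      exact hco2' _
    rw [h2, Finsupp.sum_apply]
    by_cases hk : k ∈ (coeff t).support
    · rw [Finsupp.sum, Finset.sum_eq_single k (fun j _ hj => Finsupp.single_eq_of_ne' hj)
        (fun h => absurd hk h), Finsupp.single_eq_same]
    · have hc0 : coeff t k = 0 := Finsupp.notMem_support_iff.mp hk
      rw [hc0, zero_mul, Finsupp.sum, Finset.sum_eq_zero]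
      intro j hj
      have hjk : j ≠ k := fun h => hk (h ▸ hj)
      rw [Finsupp.single_eq_of_ne' hjk]
  have hσRk : ∀ (k : ℕ) (s : S), s ∈ R ↔ (σ ^ k) s ∈ R := by
    intro k
    induction k with
    | zero => intro s; rw [pow_zero]; exact Iff.rfl
    | succ nn ih =>
      intro s
      have h1 : (σ ^ (nn + 1)) s = σ ((σ ^ nn) s) := by rw [pow_succ']; rfl
      rw [h1, ← hσR]
      exact ih s
  have hσRsymm : ∀ (k : ℕ) (s : S), s ∈ R → (σ ^ k).symm s ∈ R := by
    intro k s hs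
    have h := (hσRk k ((σ ^ k).symm s)).mpr
    apply h
    rwa [RingEquiv.apply_symm_apply]
  constructor
  · -- injectivity
    intro D f hf0 hfadd _ _ hker k m hm
    have hf00 : ∀ k' : ℕ, f k' 0 = 0 := by
      intro k'
      have h := hfadd k' 0 M.zero_mem 0 M.zero_mem
      simpa using h
    by_cases hkD : k ∈ D
    · have hmem : ∀ i, coeff (ι m) i ∈ M := by
        intro i
        rw [hcoeffi, Finsupp.single_apply]
        split
        · exact hm
        · exact M.zero_mem
      have h := hker (ι m) hmem
      rw [hcoeffi] at h
      have h2 : ∀ k' ∈ D, ((Finsupp.single 0 m).sum fun i mm =>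
          ι ((σ ^ k') (f k' mm)) * z ^ (k' + i)) = ι ((σ ^ k') (f k' m)) * z ^ k' := by
        intro k' _
        rw [Finsupp.sum_single_index (by simp [hf00 k']), Nat.add_zero]
      rw [Finset.sum_congr rfl h2] at h
      have hc : (∑ k' ∈ D, Finsupp.single k' ((σ ^ k') (f k' m)) : ℕ →₀ S) = 0 := by
        have hE : cE (∑ k' ∈ D, Finsupp.single k' ((σ ^ k') (f k' m))) = 0 := by
          rw [map_sum, Finset.sum_congr rfl fun k' _ => hEsingle k' ((σ ^ k') (f k' m))]
          exact h
        have h3 := hco2' (∑ k' ∈ D, Finsupp.single k' ((σ ^ k') (f k' m)))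
        rw [hE, hcoeff0] at h3
        exact h3.symm
      have hck : (σ ^ k) (f k m) = 0 := by
        have happ := congrArg (fun c : ℕ →₀ S => c k) hc
        simp only [Finset.sum_apply', Finsupp.coe_zero, Pi.zero_apply] at happ
        rwa [Finset.sum_eq_single k (fun j _ hj => Finsupp.single_eq_of_ne' hj)
          (fun h => absurd hkD h), Finsupp.single_eq_same] at happ
      have h4 := congrArg (σ ^ k).symm hck
      simpa only [RingEquiv.symm_apply_apply, map_zero] using h4
    · exact hf0 k hkD m hm
  · -- surjectivity
    intro φ hadd hR hlin
    obtain ⟨n, b, hbM, hbgen⟩ := hfg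
    have hP0 : ∀ i, coeff (0 : T) i ∈ M := by
      intro i
      rw [hcoeff0]
      exact M.zero_mem
    have hPadd : ∀ t t' : T, (∀ i, coeff t i ∈ M) → (∀ i, coeff t' i ∈ M) →
        ∀ i, coeff (t + t') i ∈ M := by
      intro t t' h h' i
      rw [hcoeff_add, Finsupp.add_apply]
      exact M.add_mem (h i) (h' i)
    have hφ0 : φ 0 = 0 := by
      have h := hadd 0 0 hP0 hP0
      simpa using h
    have hφsum : ∀ (α : Type) (F : Finset α) (g : α → T),
        (∀ a ∈ F, ∀ i, coeff (g a) i ∈ M) →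
        (φ (∑ a ∈ F, g a) = ∑ a ∈ F, φ (g a)) ∧ (∀ i, coeff (∑ a ∈ F, g a) i ∈ M) := by
      intro α F g
      induction F using Finset.cons_induction with
      | empty =>
        intro _
        constructor
        · simpa using hφ0
        · simpa using hP0
      | cons a F ha ih =>
        intro hmem
        obtain ⟨ih1, ih2⟩ := ih fun a' ha' => hmem a' (Finset.mem_cons_of_mem ha')
        have hga := hmem a (Finset.mem_cons_self a F)
        constructor
        · rw [Finset.sum_cons, Finset.sum_cons, hadd _ _ hga ih2, ih1]
        · rw [Finset.sum_cons]
          exact hPadd _ _ hga ih2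
    have hPi : ∀ m ∈ M, ∀ i, coeff (ι m) i ∈ M := by
      intro m hm i
      rw [hcoeffi, Finsupp.single_apply]
      split
      · exact hm
      · exact M.zero_mem
    have hPiz : ∀ m ∈ M, ∀ j : ℕ, ∀ i, coeff (ι m * z ^ j) i ∈ M := by
      intro m hm j i
      rw [hcoeffiz, Finsupp.single_apply]
      split
      · exact hm
      · exact M.zero_mem
    have hRi : ∀ r ∈ R, ∀ i, coeff (ι r) i ∈ R := by
      intro r hr i
      rw [hcoeffi, Finsupp.single_apply]
      split
      · exact hr
      · exact R.zero_mem
    have hRz : ∀ j : ℕ, ∀ i, coeff ((z : T) ^ j) i ∈ R := by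
      intro j i
      rw [hcoeffz, Finsupp.single_apply]
      split
      · exact R.one_mem
      · exact R.zero_mem
    have hφmul : ∀ m ∈ M, ∀ r ∈ R, φ (ι (m * r)) = φ (ι m) * ι r := by
      intro m hm r hr
      rw [map_mul]
      exact hlin (ι m) (hPi m hm) (ι r) (hRi r hr)
    set D : Finset ℕ := Finset.univ.biUnion (fun j : Fin n => (coeff (φ (ι (b j)))).support)
      with hD
    have hsupp : ∀ m ∈ M, ∀ k ∉ D, coeff (φ (ι m)) k = 0 := by
      intro m hm k hk
      obtain ⟨lam, hlamR, hmeq⟩ := hbgen m hm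
      have h1 : ι m = ∑ j, ι (b j * lam j) := by rw [hmeq, map_sum]
      have hmemj : ∀ j : Fin n, ∀ i, coeff (ι (b j * lam j)) i ∈ M :=
        fun j => hPi _ (hMR _ (hbM j) _ (hlamR j))
      have h2 : φ (ι m) = ∑ j, φ (ι (b j)) * ι (lam j) := by
        rw [h1, (hφsum (Fin n) Finset.univ _ (fun j _ => hmemj j)).1]
        exact Finset.sum_congr rfl fun j _ => hφmul _ (hbM j) _ (hlamR j)
      have h3 : coeff (φ (ι m)) = ∑ j, coeff (φ (ι (b j)) * ι (lam j)) := by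
        rw [h2]
        exact map_sum cC _ _
      have h4 := congrArg (fun c : ℕ →₀ S => c k) h3
      simp only [Finset.sum_apply'] at h4
      rw [h4, Finset.sum_eq_zero]
      intro j _
      rw [hmul_coeff]
      have h5 : coeff (φ (ι (b j))) k = 0 := by
        apply Finsupp.notMem_support_iff.mp
        intro hmem
        exact hk (Finset.mem_biUnion.mpr ⟨j, Finset.mem_univ j, hmem⟩)
      rw [h5, zero_mul]
    refine ⟨D, fun k m => (σ ^ k).symm (coeff (φ (ι m)) k), ?_, ?_, ?_, ?_, ?_⟩
    · intro k hk m hm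
      dsimp only
      rw [hsupp m hm k hk, map_zero]
    · intro k m hm m' hm'
      dsimp only
      have h1 : φ (ι (m + m')) = φ (ι m) + φ (ι m') := by
        rw [map_add]
        exact hadd _ _ (hPi m hm) (hPi m' hm')
      rw [h1, hcoeff_add, Finsupp.add_apply, map_add]
    · intro k m hm
      dsimp only
      exact hσRsymm k _ (hR (ι m) (hPi m hm) k)
    · intro k m hm r hr
      dsimp only
      rw [hφmul m hm r hr, hmul_coeff, map_mul, RingEquiv.symm_apply_apply]
    · intro t hPt
      simp only [RingEquiv.apply_symm_apply]
      have step2 : ∀ m ∈ M, φ (ι m) = ∑ k ∈ D, ι (coeff (φ (ι m)) k) * z ^ k := by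
        intro m hm
        have hsub : (coeff (φ (ι m))).support ⊆ D := by
          intro k hk
          by_contra hkD
          exact Finsupp.mem_support_iff.mp hk (hsupp m hm k hkD)
        conv_lhs => rw [hco1 (φ (ι m))]
        exact Finsupp.sum_of_support_subset _ hsub _ (fun k _ => by simp)
      have step1 : φ t = ∑ i ∈ (coeff t).support, φ (ι (coeff t i)) * z ^ i := by
        have h0 : t = ∑ i ∈ (coeff t).support, ι (coeff t i) * z ^ i := hco1 t
        conv_lhs => rw [h0]
        rw [(hφsum ℕ (coeff t).support _ (fun i _ => hPiz _ (hPt i) i)).1]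
        exact Finset.sum_congr rfl fun i _ => hlin _ (hPi _ (hPt i)) _ (hRz i)
      calc φ t = ∑ i ∈ (coeff t).support, φ (ι (coeff t i)) * z ^ i := step1
        _ = ∑ i ∈ (coeff t).support, ∑ k ∈ D,
              ι (coeff (φ (ι (coeff t i))) k) * z ^ (k + i) := by
            refine Finset.sum_congr rfl fun i _ => ?_
            have e := step2 _ (hPt i)
            conv_lhs => rw [e]
            rw [Finset.sum_mul]
            exact Finset.sum_congr rfl fun k _ => by rw [mul_assoc, ← pow_add]
        _ = ∑ k ∈ D, ∑ i ∈ (coeff t).support,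
              ι (coeff (φ (ι (coeff t i))) k) * z ^ (k + i) := Finset.sum_comm
        _ = ∑ k ∈ D, (coeff t).sum fun i m => ι (coeff (φ (ι m)) k) * z ^ (k + i) := rfl
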